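/- In the setting below (with the additional constraints r_{k+1,k} ≤ 1/k and r_{k+1,l} ≤ r_{l',l}/k whenever 0 ≤ l < l' ≤ k), suppose k ≥ 1, 0 ≤ λ < λ+ψ ≤ 1, w > 0, ε ∈ (0,1) and y ∈ M_k(λ,w). Then: (1) the closed ball B̄(y, ψw) is contained in M_k(λ+ψ, w); and (2) if 2δ ∈ (ψw, ψα₀) and 20/(ρψk) < ε < 1, then for each s ∈ R with K_s ⊆ B̄(y,δ) there exists t ∈ R with γ(t,s) < εδ and K_t ⊆ M_{k+j}(λ+ψ) for all j ≥ 1. -/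

import Mathlib

open Metric Set

/-- A tube triple `(r,w,α) ∈ 𝒯 = {(r,w,α) ∈ R × (0,ε₀) × (0,∞) : K_r ⊆ 𝔾, w ≤ α}`. -/
def TubeTriple {Y R : Type*} [MetricSpace Y] (K : R → Set Y) (𝔾 : Set Y) (ε₀ : ℝ)
    (p : R × ℝ × ℝ) : Prop :=
  K p.1 ⊆ 𝔾 ∧ 0 < p.2.1 ∧ p.2.1 < ε₀ ∧ 0 < p.2.2 ∧ p.2.1 ≤ p.2.2

/-- The set `M_k(λ,w)` of Definition 6.4 of the paper. -/
def Mkw {Y R : Type*} [MetricSpace Y] (K : R → Set Y)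
    (Rk : ℕ → Set (R × ℝ × ℝ)) (Rkl : ℕ → ℕ → (R × ℝ × ℝ) → Set (R × ℝ × ℝ))
    (k : ℕ) (lam w : ℝ) : Set Y :=
  {y | ∃ n : ℕ, 1 ≤ n ∧ ∃ (l : ℕ → ℕ) (trip : ℕ → R × ℝ × ℝ),
    l 0 = 0 ∧ l n = k ∧ (∀ m : ℕ, m < n → l m < l (m + 1)) ∧
    (∀ m : ℕ, m ≤ n → trip m ∈ Rk (l m)) ∧
    (∀ m : ℕ, 1 ≤ m → m ≤ n → trip m ∈ Rkl (l m) (l (m - 1)) (trip (m - 1))) ∧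
    (∀ m : ℕ, m ≤ n → infDist y (K (trip m).1) ≤ lam * (trip m).2.2) ∧
    infDist y (K (trip n).1) ≤ lam * (trip n).2.1 ∧
    (trip n).2.1 = w}

/-- `M_k(λ) = ⋃_{w>0} M_k(λ,w)`. -/
def Mk {Y R : Type*} [MetricSpace Y] (K : R → Set Y)
    (Rk : ℕ → Set (R × ℝ × ℝ)) (Rkl : ℕ → ℕ → (R × ℝ × ℝ) → Set (R × ℝ × ℝ))
    (k : ℕ) (lam : ℝ) : Set Y :=
  {y | ∃ w : ℝ, 0 < w ∧ y ∈ Mkw K Rk Rkl k lam w}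

set_option maxHeartbeats 1000000 in
/-- Lemma 6.6 of the paper: the key approximation property of the sets
`M_k(λ,w)`. -/
theorem statement19 {Y R : Type*} [MetricSpace Y] [MetricSpace R]
    (K : R → Set Y) (hKne : ∀ r, (K r).Nonempty) (hKcpt : ∀ r, IsCompact (K r))
    (hKdist : ∀ r s, hausdorffDist (K r) (K s) ≤ dist r s)
    (ρ ε₀ : ℝ) (hρ : 0 < ρ) (hρ1 : ρ < 1) (hε₀ : 0 < ε₀)
    (G : ℕ → Set Y) (hGopen : ∀ k : ℕ, 1 ≤ k → IsOpen (G k))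
    (hGnested : ∀ k : ℕ, 1 ≤ k → G (k + 1) ⊆ G k)
    (𝔾 : Set Y) (h𝔾 : 𝔾 = ⋂ (k : ℕ) (_ : 1 ≤ k), G k)
    (rkl : ℕ → ℕ → ℝ)
    (hrkl : ∀ k l : ℕ, l < k → 0 < rkl k l ∧ rkl k l < ρ / 10)
    -- the additional constraints on the constants `r_{k,l}`
    (hrklA : ∀ k : ℕ, 1 ≤ k → rkl (k + 1) k ≤ 1 / k)
    (hrklB : ∀ l l' k : ℕ, 1 ≤ k → l < l' → l' ≤ k → rkl (k + 1) l ≤ rkl l' l / k)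
    (p₀ : R × ℝ × ℝ) (hp₀ : TubeTriple K 𝔾 ε₀ p₀)
    (Rkl : ℕ → ℕ → (R × ℝ × ℝ) → Set (R × ℝ × ℝ))
    (hRklT : ∀ (k l : ℕ) (p : R × ℝ × ℝ), l < k → TubeTriple K 𝔾 ε₀ p →
      ∀ q ∈ Rkl k l p, TubeTriple K 𝔾 ε₀ q)
    -- property (1)
    (hRkl1 : ∀ (k l : ℕ) (p : R × ℝ × ℝ), l < k → TubeTriple K 𝔾 ε₀ p →
      ∀ s : R, K s ⊆ cthickening p.2.2 (K p.1) →
        ∃ q ∈ Rkl k l p, dist q.1 s ≤ (10 / ρ) * rkl k l * p.2.1)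
    -- property (2)
    (hRkl2 : ∀ (k l : ℕ) (p : R × ℝ × ℝ), l < k → TubeTriple K 𝔾 ε₀ p →
      ∀ q ∈ Rkl k l p,
        q.2.2 = rkl k l * p.2.1 ∧ rkl k l * p.2.1 < p.2.2 / 10 ∧ q.2.1 < ε₀ / k)
    -- property (3)
    (hRkl3 : ∀ (k l : ℕ) (p : R × ℝ × ℝ), l < k → TubeTriple K 𝔾 ε₀ p →
      ∀ q ∈ Rkl k l p,
        cthickening q.2.1 (K q.1) ⊆ G k ∧ K q.1 ⊆ cthickening (2 * p.2.2) (K p.1))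
    -- property (4)
    (hRkl4 : ∀ (k l : ℕ) (p : R × ℝ × ℝ), l < k → TubeTriple K 𝔾 ε₀ p →
      ∀ B : Set Y, Metric.diam B ≤ 8 * rkl k l * p.2.1 →
        {q ∈ Rkl k l p | (K q.1 ∩ B).Nonempty}.Finite)
    -- property (5)
    (hRkl5 : ∀ (k l : ℕ) (p : R × ℝ × ℝ), l < k → TubeTriple K 𝔾 ε₀ p →
      ∃ v : ℝ, 0 < v ∧ (p.1, v, rkl k l * p.2.1) ∈ Rkl k l p)
    (Rk : ℕ → Set (R × ℝ × ℝ))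
    (hRk0 : Rk 0 = {p₀})
    (hRkrec : ∀ k : ℕ, 1 ≤ k →
      Rk k = ⋃ (l : ℕ) (_ : l < k), ⋃ p ∈ Rk l, Rkl k l p)
    (k : ℕ) (hk : 1 ≤ k) (lam ψ w ε : ℝ)
    (hlam : 0 ≤ lam) (hψ : 0 < ψ) (hlamψ : lam + ψ ≤ 1) (hw : 0 < w)
    (hε : 0 < ε) (hε1 : ε < 1)
    (y : Y) (hy : y ∈ Mkw K Rk Rkl k lam w) :
    -- (1)
    closedBall y (ψ * w) ⊆ Mkw K Rk Rkl k (lam + ψ) w ∧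
    -- (2)
    ∀ δ : ℝ, ψ * w < 2 * δ → 2 * δ < ψ * p₀.2.2 → 20 / (ρ * ψ * k) < ε →
      ∀ s : R, K s ⊆ closedBall y δ →
        ∃ t : R, dist t s < ε * δ ∧
          ∀ j : ℕ, 1 ≤ j → K t ⊆ Mk K Rk Rkl (k + j) (lam + ψ) := by
  
  classical
  -- all members of any `Rk j` are tube triples
  have hTTRk : ∀ j : ℕ, ∀ q ∈ Rk j, TubeTriple K 𝔾 ε₀ q := by
    intro j
    induction j using Nat.strong_induction_on with
    | _ j ih =>
      intro q hq
      rcases Nat.eq_zero_or_pos j with hj | hj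
      · subst hj; rw [hRk0, mem_singleton_iff] at hq; rw [hq]; exact hp₀
      · rw [hRkrec j hj] at hq
        simp only [mem_iUnion, exists_prop] at hq
        obtain ⟨l', hl', p, hp, hq⟩ := hq
        exact hRklT j l' p hl' (ih l' hl' p hp) q hq
  obtain ⟨n, hn1, l, trip, hl0, hln, hlmono, hmem, hchain, hdist, hdistn, hwfin⟩ := hy
  have hTT : ∀ m, m ≤ n → TubeTriple K 𝔾 ε₀ (trip m) := fun m hm => hTTRk _ _ (hmem m hm)
  -- `l` is monotone on `[0, n]`
  have hlle : ∀ b, b ≤ n → ∀ a, a ≤ b → l a ≤ l b := by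
    intro b
    induction b with
    | zero =>
      intro _ a ha
      have : a = 0 := by omega
      rw [this]
    | succ b ih =>
      intro hb a ha
      rcases Nat.lt_or_ge a (b + 1) with h | h
      · exact le_of_lt (lt_of_le_of_lt (ih (by omega) a (by omega)) (hlmono b (by omega)))
      · have : a = b + 1 := by omega
        rw [this]
  have hlk : ∀ m, m ≤ n → l m ≤ k := fun m hm => hln ▸ hlle n le_rfl m hm
  -- basic facts about each chain step
  have hstep2 : ∀ m, 1 ≤ m → m ≤ n →
      (trip m).2.2 = rkl (l m) (l (m - 1)) * (trip (m - 1)).2.1 ∧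
        rkl (l m) (l (m - 1)) * (trip (m - 1)).2.1 < (trip (m - 1)).2.2 / 10 := by
    intro m hm1 hmn
    have hlt : l (m - 1) < l m := by
      have := hlmono (m - 1) (by omega)
      have h1 : m - 1 + 1 = m := by omega
      rwa [h1] at this
    have h := hRkl2 (l m) (l (m - 1)) (trip (m - 1)) hlt (hTT (m - 1) (by omega)) (trip m)
      (hchain m hm1 hmn)
    exact ⟨h.1, h.2.1⟩
  -- weights decrease along the chain
  have hwmono : ∀ m, m < n → (trip (m + 1)).2.1 ≤ (trip m).2.1 := by
    intro m hm
    have h2 := hstep2 (m + 1) (by omega) (by omega)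
    simp only [Nat.add_sub_cancel] at h2
    have hT := hTT (m + 1) (by omega)
    have hr := hrkl (l (m + 1)) (l m) (hlmono m hm)
    have hwpos := (hTT m (le_of_lt hm)).2.1
    nlinarith [hT.2.2.2.2, h2.1, hr.1, hr.2]
  have hwle : ∀ b, b ≤ n → ∀ a, a ≤ b → (trip b).2.1 ≤ (trip a).2.1 := by
    intro b
    induction b with
    | zero =>
      intro _ a ha
      have : a = 0 := by omega
      rw [this]
    | succ b ih =>
      intro hb a ha
      rcases Nat.lt_or_ge a (b + 1) with h | h
      · exact le_trans (hwmono b (by omega)) (ih (by omega) a (by omega))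
      · have : a = b + 1 := by omega
        rw [this]
  -- the `α` also decrease along the chain
  have hαmono : ∀ m, m < n → (trip (m + 1)).2.2 ≤ (trip m).2.2 := by
    intro m hm
    have h2 := hstep2 (m + 1) (by omega) (by omega)
    simp only [Nat.add_sub_cancel] at h2
    have hαpos := (hTT m (le_of_lt hm)).2.2.2.1
    nlinarith [h2.1, h2.2]
  have hαle : ∀ b, b ≤ n → ∀ a, a ≤ b → (trip b).2.2 ≤ (trip a).2.2 := by
    intro b
    induction b with
    | zero =>
      intro _ a ha
      have : a = 0 := by omega
      rw [this]
    | succ b ih =>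
      intro hb a ha
      rcases Nat.lt_or_ge a (b + 1) with h | h
      · exact le_trans (hαmono b (by omega)) (ih (by omega) a (by omega))
      · have : a = b + 1 := by omega
        rw [this]
  have hwα : ∀ m, m ≤ n → w ≤ (trip m).2.2 := by
    intro m hm
    have h1 : (trip n).2.1 ≤ (trip m).2.1 := hwle n le_rfl m hm
    have h2 := (hTT m hm).2.2.2.2
    rw [hwfin] at h1
    linarith
  constructor
  · -- part (1)
    intro z hz
    have hdzy : dist z y ≤ ψ * w := mem_closedBall.mp hz
    refine ⟨n, hn1, l, trip, hl0, hln, hlmono, hmem, hchain, ?_, ?_, hwfin⟩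
    · intro m hm
      have h1 : infDist z (K (trip m).1) ≤ infDist y (K (trip m).1) + dist z y :=
        infDist_le_infDist_add_dist
      have h2 := hdist m hm
      have h3 : ψ * w ≤ ψ * (trip m).2.2 := mul_le_mul_of_nonneg_left (hwα m hm) hψ.le
      nlinarith
    · have h1 : infDist z (K (trip n).1) ≤ infDist y (K (trip n).1) + dist z y :=
        infDist_le_infDist_add_dist
      rw [hwfin]
      nlinarith [hdistn, hwfin]
  · -- part (2)
    intro δ hδ1 hδ2 hεk s hs
    have hδpos : 0 < δ := by nlinarith
    have hkpos : (0 : ℝ) < (k : ℝ) := by exact_mod_cast hk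
    have htrip0 : trip 0 = p₀ := by
      have := hmem 0 (by omega)
      rw [hl0, hRk0, mem_singleton_iff] at this
      exact this
    set P : ℕ → Prop := fun m => 2 * δ ≤ ψ * (trip m).2.2 with hP
    have hP0 : P 0 := by rw [hP]; simp only [htrip0]; linarith
    set M : ℕ := Nat.findGreatest P n with hM
    have hMn : M ≤ n := Nat.findGreatest_le n
    have hPM : P M := Nat.findGreatest_spec (Nat.zero_le n) hP0
    have hMmax : ∀ m, M < m → m ≤ n → ¬P m := fun m h1 h2 =>
      Nat.findGreatest_is_greatest h1 h2
    have hPM' : 2 * δ ≤ ψ * (trip M).2.2 := hPM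
    have hTTM := hTT M hMn
    have hlkM : l M ≤ k := hlk M hMn
    -- apply property (1) at level `k+1` to the triple `trip M`
    have hsub : K s ⊆ cthickening (trip M).2.2 (K (trip M).1) := by
      intro x hx
      obtain ⟨z, hz, hzd⟩ := (hKcpt (trip M).1).exists_infDist_eq_dist (hKne _) y
      have h1 : dist x z ≤ dist x y + dist y z := dist_triangle x y z
      have h2 : dist x y ≤ δ := mem_closedBall.mp (hs hx)
      have h3 : dist y z ≤ lam * (trip M).2.2 := by rw [← hzd]; exact hdist M hMn
      have hαpos := hTTM.2.2.2.1
      refine mem_cthickening_of_dist_le x z _ _ hz ?_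
      nlinarith
    obtain ⟨q, hq, hqd⟩ := hRkl1 (k + 1) (l M) (trip M) (by omega) hTTM s hsub
    have hTTq : TubeTriple K 𝔾 ε₀ q := hRklT (k + 1) (l M) (trip M) (by omega) hTTM q hq
    have hqRk : q ∈ Rk (k + 1) := by
      rw [hRkrec (k + 1) (by omega)]
      simp only [mem_iUnion, exists_prop]
      exact ⟨l M, by omega, trip M, hmem M hMn, hq⟩
    -- the distance estimate
    have hqs : dist q.1 s < ε * δ := by
      have key : ∃ A : ℝ, 0 < A ∧ dist q.1 s ≤ 10 * A / (ρ * k) ∧ ψ * A < 2 * δ := by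
        rcases eq_or_lt_of_le hMn with he | hlt
        · refine ⟨w, hw, ?_, by linarith⟩
          have hc : rkl (k + 1) (l M) ≤ 1 / k := by rw [he, hln]; exact hrklA k hk
          have hcpos := (hrkl (k + 1) (l M) (by omega)).1
          have htw : (trip M).2.1 = w := by rw [he, hwfin]
          calc dist q.1 s ≤ 10 / ρ * rkl (k + 1) (l M) * (trip M).2.1 := hqd
            _ = 10 / ρ * rkl (k + 1) (l M) * w := by rw [htw]
            _ ≤ 10 / ρ * (1 / k) * w :=
              mul_le_mul_of_nonneg_right
                (mul_le_mul_of_nonneg_left hc (by positivity)) hw.le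
            _ = 10 * w / (ρ * k) := by field_simp
        · have hnP : ¬P (M + 1) := hMmax (M + 1) (by omega) (by omega)
          have hα1 : ψ * (trip (M + 1)).2.2 < 2 * δ := by
            by_contra hcon
            push_neg at hcon
            exact hnP (by rw [hP]; exact hcon)
          have h2 := hstep2 (M + 1) (by omega) (by omega)
          simp only [Nat.add_sub_cancel] at h2
          have hB := hrklB (l M) (l (M + 1)) k hk (hlmono M hlt) (hlk (M + 1) (by omega))
          have hwMpos := hTTM.2.1
          have hr'pos := (hrkl (l (M + 1)) (l M) (hlmono M hlt)).1
          refine ⟨rkl (l (M + 1)) (l M) * (trip M).2.1, by positivity, ?_, by rw [← h2.1]; exact hα1⟩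
          calc dist q.1 s ≤ 10 / ρ * rkl (k + 1) (l M) * (trip M).2.1 := hqd
            _ ≤ 10 / ρ * (rkl (l (M + 1)) (l M) / k) * (trip M).2.1 :=
              mul_le_mul_of_nonneg_right
                (mul_le_mul_of_nonneg_left hB (by positivity)) hwMpos.le
            _ = 10 * (rkl (l (M + 1)) (l M) * (trip M).2.1) / (ρ * k) := by field_simp
      obtain ⟨A, hA, h1, h2⟩ := key
      have hρk : 0 < ρ * k := by positivity
      rw [div_lt_iff₀ (by positivity)] at hεk
      have h3 : 10 * A / (ρ * k) < ε * δ := by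
        rw [div_lt_iff₀ hρk]
        nlinarith [mul_pos (mul_pos (mul_pos hε hρ) hkpos) (show 0 < 2 * δ - ψ * A by linarith),
          mul_pos (show 0 < ε * (ρ * ψ * k) - 20 by linarith) hA]
      linarith
    -- key estimate: every point of `K q.1` is close to all `K (trip m).1`, `m ≤ M`
    have hKt : ∀ x ∈ K q.1, ∀ m, m ≤ M → infDist x (K (trip m).1) ≤ (lam + ψ) * (trip m).2.2 := by
      intro x hx m hm
      have hfin : EMetric.hausdorffEdist (K q.1) (K s) ≠ ⊤ :=
        hausdorffEdist_ne_top_of_nonempty_of_bounded (hKne _) (hKne _)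
          (hKcpt _).isBounded (hKcpt _).isBounded
      obtain ⟨x', hx', hxd⟩ := (hKcpt s).exists_infDist_eq_dist (hKne s) x
      have h1 : dist x x' ≤ dist q.1 s := by
        rw [← hxd]
        exact le_trans (infDist_le_hausdorffDist_of_mem hx hfin) (hKdist q.1 s)
      have h2 : infDist x (K (trip m).1) ≤ infDist x' (K (trip m).1) + dist x x' :=
        infDist_le_infDist_add_dist
      have h3 : infDist x' (K (trip m).1) ≤ infDist y (K (trip m).1) + dist x' y :=
        infDist_le_infDist_add_dist
      have h4 : dist x' y ≤ δ := mem_closedBall.mp (hs hx')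
      have h5 : infDist y (K (trip m).1) ≤ lam * (trip m).2.2 := hdist m (le_trans hm hMn)
      have h6 : ψ * (trip M).2.2 ≤ ψ * (trip m).2.2 :=
        mul_le_mul_of_nonneg_left (hαle M hMn m hm) hψ.le
      nlinarith
    have hlampos : 0 < lam + ψ := by linarith
    refine ⟨q.1, hqs, ?_⟩
    intro j hj x hx
    rcases eq_or_lt_of_le hj with he1 | hj2
    · -- j = 1
      obtain ⟨L, T, hLlow, hLtop, hTlow, hTtop⟩ :
          ∃ (L : ℕ → ℕ) (T : ℕ → R × ℝ × ℝ),
            (∀ m, m ≠ M + 1 → L m = l m) ∧ L (M + 1) = k + 1 ∧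
            (∀ m, m ≠ M + 1 → T m = trip m) ∧ T (M + 1) = q := by
        refine ⟨fun m => if m = M + 1 then k + 1 else l m,
          fun m => if m = M + 1 then q else trip m, ?_, ?_, ?_, ?_⟩
        · intro m hm; simp only [if_neg hm]
        · simp
        · intro m hm; simp only [if_neg hm]
        · simp
      refine ⟨q.2.1, hTTq.2.1, M + 1, by omega, L, T, ?_, ?_, ?_, ?_, ?_, ?_, ?_, ?_⟩
      · rw [hLlow 0 (by omega), hl0]
      · rw [hLtop, ← he1]
      · intro m hm
        rcases Nat.lt_or_ge m M with h | h
        · rw [hLlow m (by omega), hLlow (m + 1) (by omega)]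
          exact hlmono m (by omega)
        · have hmM : m = M := by omega
          rw [hmM, hLlow M (by omega), hLtop]
          have := hlkM
          omega
      · intro m hm
        rcases Nat.lt_or_ge m (M + 1) with h | h
        · rw [hTlow m (by omega), hLlow m (by omega)]
          exact hmem m (by omega)
        · have : m = M + 1 := by omega
          subst this
          rw [hTtop, hLtop]
          exact hqRk
      · intro m hm1 hm2
        rcases Nat.lt_or_ge m (M + 1) with h | h
        · rw [hTlow m (by omega), hTlow (m - 1) (by omega),
            hLlow m (by omega), hLlow (m - 1) (by omega)]
          exact hchain m hm1 (by omega)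
        · have : m = M + 1 := by omega
          subst this
          rw [hTtop, hLtop]
          simp only [Nat.add_sub_cancel]
          rw [hTlow M (by omega), hLlow M (by omega)]
          exact hq
      · intro m hm
        rcases Nat.lt_or_ge m (M + 1) with h | h
        · rw [hTlow m (by omega)]
          exact hKt x hx m (by omega)
        · have : m = M + 1 := by omega
          subst this
          rw [hTtop, infDist_zero_of_mem hx]
          have := hTTq.2.2.2.1
          positivity
      · rw [hTtop, infDist_zero_of_mem hx]
        have := hTTq.2.1
        positivity
      · rw [hTtop]
    · -- j ≥ 2
      obtain ⟨v', hv', hq'⟩ := hRkl5 (k + j) (k + 1) q (by omega) hTTq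
      set q' : R × ℝ × ℝ := (q.1, v', rkl (k + j) (k + 1) * q.2.1) with hq'def
      have hq'Rk : q' ∈ Rk (k + j) := by
        rw [hRkrec (k + j) (by omega)]
        simp only [mem_iUnion, exists_prop]
        exact ⟨k + 1, by omega, q, hqRk, hq'⟩
      have hrpos := (hrkl (k + j) (k + 1) (by omega)).1
      obtain ⟨L, T, hLlow, hLmid, hLtop, hTlow, hTmid, hTtop⟩ :
          ∃ (L : ℕ → ℕ) (T : ℕ → R × ℝ × ℝ),
            (∀ m, m ≠ M + 1 → m ≠ M + 2 → L m = l m) ∧ L (M + 1) = k + 1 ∧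
              L (M + 2) = k + j ∧
            (∀ m, m ≠ M + 1 → m ≠ M + 2 → T m = trip m) ∧ T (M + 1) = q ∧
              T (M + 2) = q' := by
        refine ⟨fun m => if m = M + 2 then k + j else if m = M + 1 then k + 1 else l m,
          fun m => if m = M + 2 then q' else if m = M + 1 then q else trip m,
          ?_, ?_, ?_, ?_, ?_, ?_⟩
        · intro m hm1 hm2; simp only [if_neg hm1, if_neg hm2]
        · simp only [if_neg (show M + 1 ≠ M + 2 by omega)]; simp
        · simp
        · intro m hm1 hm2; simp only [if_neg hm1, if_neg hm2]
        · simp only [if_neg (show M + 1 ≠ M + 2 by omega)]; simp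
        · simp
      refine ⟨v', hv', M + 2, by omega, L, T, ?_, ?_, ?_, ?_, ?_, ?_, ?_, ?_⟩
      · rw [hLlow 0 (by omega) (by omega), hl0]
      · rw [hLtop]
      · intro m hm
        rcases Nat.lt_or_ge m M with h | h
        · rw [hLlow m (by omega) (by omega), hLlow (m + 1) (by omega) (by omega)]
          exact hlmono m (by omega)
        · rcases Nat.lt_or_ge m (M + 1) with h' | h'
          · have hmM : m = M := by omega
            rw [hmM, hLlow M (by omega) (by omega), hLmid]
            have := hlkM
            omega
          · have : m = M + 1 := by omega
            subst this
            rw [hLmid, hLtop]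
            omega
      · intro m hm
        rcases Nat.lt_or_ge m (M + 1) with h | h
        · rw [hTlow m (by omega) (by omega), hLlow m (by omega) (by omega)]
          exact hmem m (by omega)
        · rcases Nat.lt_or_ge m (M + 2) with h' | h'
          · have : m = M + 1 := by omega
            subst this
            rw [hTmid, hLmid]
            exact hqRk
          · have : m = M + 2 := by omega
            subst this
            rw [hTtop, hLtop]
            exact hq'Rk
      · intro m hm1 hm2
        rcases Nat.lt_or_ge m (M + 1) with h | h
        · rw [hTlow m (by omega) (by omega), hTlow (m - 1) (by omega) (by omega),
            hLlow m (by omega) (by omega), hLlow (m - 1) (by omega) (by omega)]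
          exact hchain m hm1 (by omega)
        · rcases Nat.lt_or_ge m (M + 2) with h' | h'
          · have : m = M + 1 := by omega
            subst this
            rw [hTmid, hLmid]
            simp only [Nat.add_sub_cancel]
            rw [hTlow M (by omega) (by omega), hLlow M (by omega) (by omega)]
            exact hq
          · have : m = M + 2 := by omega
            subst this
            rw [hTtop, hLtop]
            have h21 : M + 2 - 1 = M + 1 := by omega
            rw [h21, hTmid, hLmid]
            exact hq'
      · intro m hm
        rcases Nat.lt_or_ge m (M + 1) with h | h
        · rw [hTlow m (by omega) (by omega)]
          exact hKt x hx m (by omega)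
        · rcases Nat.lt_or_ge m (M + 2) with h' | h'
          · have : m = M + 1 := by omega
            subst this
            rw [hTmid, infDist_zero_of_mem hx]
            have := hTTq.2.2.2.1
            positivity
          · have : m = M + 2 := by omega
            subst this
            rw [hTtop]
            have hKq' : (q' : R × ℝ × ℝ).1 = q.1 := rfl
            rw [hKq', infDist_zero_of_mem hx]
            have hq22 : (q' : R × ℝ × ℝ).2.2 = rkl (k + j) (k + 1) * q.2.1 := rfl
            rw [hq22]
            have := hTTq.2.1
            positivity
      · rw [hTtop]
        have hKq' : (q' : R × ℝ × ℝ).1 = q.1 := rfl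
        rw [hKq', infDist_zero_of_mem hx]
        have hq21 : (q' : R × ℝ × ℝ).2.1 = v' := rfl
        rw [hq21]
        positivity
      · rw [hTtop]
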